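/- Let A be a locally finite hyperplane arrangement in ℝⁿ, ≺ a valid order of the chambers, and C a chamber with associated flat X_C. Then the subposet N(C) of the Salvetti poset is isomorphic, as a ranked poset, to the face poset of the restricted arrangement A^{X_C} = { H ∩ X_C : H ∈ A, H ⊉ X_C } in X_C; the isomorphism sends ⟨D,F⟩ to F, with inverse sending a face F of A^{X_C} to ⟨C.F, F⟩. -/

import Mathlib

open Metric Set MeasureTheory

noncomputable section

/-- A locally finite arrangement of affine hyperplanes in ℝⁿ, given by affine
equations `⟪a i, x⟫ = b i` with `a i ≠ 0`, indexed injectively by `ι`. -/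
structure Arrangement (n : ℕ) (ι : Type) where
  a : ι → EuclideanSpace ℝ (Fin n)
  b : ι → ℝ
  ha : ∀ i, a i ≠ 0
  inj : Function.Injective fun i => {x : EuclideanSpace ℝ (Fin n) | (inner ℝ (a i) x : ℝ) = b i}
  locFin : ∀ x : EuclideanSpace ℝ (Fin n), ∃ ε > 0,
    {i : ι | ∃ y ∈ Metric.ball x ε, (inner ℝ (a i) y : ℝ) = b i}.Finite

namespace Arrangement

variable {n : ℕ} {ι : Type} (A : Arrangement n ι)

/-- The defining affine functional of the `i`-th hyperplane. -/
def val (i : ι) (x : EuclideanSpace ℝ (Fin n)) : ℝ := (inner ℝ (A.a i) x : ℝ) - A.b i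

/-- The `i`-th hyperplane. -/
def hyperplane (i : ι) : Set (EuclideanSpace ℝ (Fin n)) := {x | A.val i x = 0}

/-- The sign vector of a point. -/
def signAt (x : EuclideanSpace ℝ (Fin n)) : ι → SignType := fun i => SignType.sign (A.val i x)

/-- The (relatively open) stratum with sign vector `σ`. -/
def openCell (σ : ι → SignType) : Set (EuclideanSpace ℝ (Fin n)) :=
  {x | ∀ i, SignType.sign (A.val i x) = σ i}

/-- The (closed) faces of the arrangement: closures of the strata. -/
def IsFace (F : Set (EuclideanSpace ℝ (Fin n))) : Prop :=
  ∃ x : EuclideanSpace ℝ (Fin n), F = closure (A.openCell (A.signAt x))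

/-- Chambers: closed faces of codimension 0. -/
def IsChamber (C : Set (EuclideanSpace ℝ (Fin n))) : Prop :=
  ∃ x : EuclideanSpace ℝ (Fin n), (∀ i, A.val i x ≠ 0) ∧
    C = closure (A.openCell (A.signAt x))

/-- The support of a subset: the hyperplanes containing it. -/
def supp (U : Set (EuclideanSpace ℝ (Fin n))) : Set ι := {i | U ⊆ A.hyperplane i}

/-- The set of hyperplanes separating two chambers. -/
def sep (C C' : Set (EuclideanSpace ℝ (Fin n))) : Set ι :=
  {i | ∀ x ∈ interior C, ∀ y ∈ interior C', A.val i x * A.val i y < 0}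

/-- `F` is a face of the chamber (or face) `C`. -/
def IsFaceOf (F C : Set (EuclideanSpace ℝ (Fin n))) : Prop := A.IsFace F ∧ F ⊆ C

/-- `A.IsCF C F D` means `D = C.F`: `D` is the unique chamber containing `F` and not
separated from `C` by any hyperplane of `supp F`. -/
def IsCF (C F D : Set (EuclideanSpace ℝ (Fin n))) : Prop :=
  A.IsChamber D ∧ F ⊆ D ∧ A.sep C D ∩ A.supp F = ∅

/-- `A.IsOpp D F E` means `E = D^F`: `E` is the chamber opposite to `D` with respect to
its face `F`, i.e. the hyperplanes separating `D` and `E` are exactly those containing `F`. -/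
def IsOpp (D F E : Set (EuclideanSpace ℝ (Fin n))) : Prop :=
  A.IsChamber E ∧ F ⊆ E ∧ A.sep D E = A.supp F

/-- Flats: nonempty intersections of subfamilies of hyperplanes (including ℝⁿ itself). -/
def IsFlat (X : Set (EuclideanSpace ℝ (Fin n))) : Prop :=
  X.Nonempty ∧ ∃ s : Set ι, X = ⋂ i ∈ s, A.hyperplane i

/-- A cell `⟨C, F⟩` of the Salvetti complex: a chamber `C` together with a face `F` of `C`. -/
structure Cell {n : ℕ} {ι : Type} (𝒜 : Arrangement n ι) where
  C : Set (EuclideanSpace ℝ (Fin n))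
  F : Set (EuclideanSpace ℝ (Fin n))
  isChamber : 𝒜.IsChamber C
  isFace : 𝒜.IsFace F
  faceLe : F ⊆ C

/-- The Salvetti order: `⟨C,F⟩ ≤ ⟨D,G⟩` iff `F ⪯ G` (i.e. `F ⊇ G`) and `D.F = C`. -/
def cellLE (c d : A.Cell) : Prop := d.F ⊆ c.F ∧ A.IsCF d.C c.F c.C

/-- The subcomplex `S(C)`: cells `⟨D,F⟩` with `D = C.F`. -/
def inS (C : Set (EuclideanSpace ℝ (Fin n))) (c : A.Cell) : Prop := A.IsCF C c.F c.C

/-- A strict total order on the chambers. -/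
def IsChamberOrder (lt : Set (EuclideanSpace ℝ (Fin n)) → Set (EuclideanSpace ℝ (Fin n)) → Prop) :
    Prop :=
  (∀ C C', A.IsChamber C → A.IsChamber C' → C ≠ C' → lt C C' ∨ lt C' C) ∧
  (∀ C, ¬ lt C C) ∧
  (∀ C C' C'', lt C C' → lt C' C'' → lt C C'')

/-- The upper ideal `J(C)` of the poset of flats determined by a total order on chambers. -/
def J (lt : Set (EuclideanSpace ℝ (Fin n)) → Set (EuclideanSpace ℝ (Fin n)) → Prop)
    (C : Set (EuclideanSpace ℝ (Fin n))) : Set (Set (EuclideanSpace ℝ (Fin n))) :=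
  {X | A.IsFlat X ∧ ∀ C', A.IsChamber C' → lt C' C → (A.supp X ∩ A.sep C C').Nonempty}

/-- A valid order: for each chamber `C`, the ideal `J(C)` is the principal upper ideal
(in the poset of flats ordered by reverse inclusion) generated by `X_C = |F_C|` for some
face `F_C` of `C`. -/
def IsValidOrder
    (lt : Set (EuclideanSpace ℝ (Fin n)) → Set (EuclideanSpace ℝ (Fin n)) → Prop) : Prop :=
  A.IsChamberOrder lt ∧
  ∀ C, A.IsChamber C → ∃ F_C, A.IsFaceOf F_C C ∧
    A.J lt C = {X | A.IsFlat X ∧ X ⊆ (affineSpan ℝ F_C : Set (EuclideanSpace ℝ (Fin n)))}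

/-- Membership in `N(C)`: cells of `S(C)` not lying in any earlier `S(C')`. -/
def inN (lt : Set (EuclideanSpace ℝ (Fin n)) → Set (EuclideanSpace ℝ (Fin n)) → Prop)
    (C : Set (EuclideanSpace ℝ (Fin n))) (c : A.Cell) : Prop :=
  A.inS C c ∧ ∀ C', A.IsChamber C' → lt C' C → ¬ A.inS C' c

/-- A point `x₀` is generic with respect to `A`: (i) chambers at equal distance from `x₀`
have the same metric projection of `x₀`, lying in their intersection; (ii) distances to
strictly comparable flats are strictly comparable. -/
def IsGeneric (x₀ : EuclideanSpace ℝ (Fin n)) : Prop :=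
  (∀ C C', A.IsChamber C → A.IsChamber C' → infDist x₀ C = infDist x₀ C' →
    ∀ p ∈ C, ∀ p' ∈ C', (∀ q ∈ C, dist x₀ p ≤ dist x₀ q) →
      (∀ q ∈ C', dist x₀ p' ≤ dist x₀ q) → p = p' ∧ p ∈ C ∩ C') ∧
  (∀ L L', A.IsFlat L → A.IsFlat L' → L' ⊂ L → infDist x₀ L < infDist x₀ L')


-- basic sign helpers
lemma sign_eq_of_abs_lt {u v : ℝ} (h : |u - v| < |v|) : SignType.sign u = SignType.sign v := by
  rcases lt_trichotomy v 0 with hv | hv | hv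
  · have : u < 0 := by
      have := abs_lt.1 h
      have h2 : |v| = -v := abs_of_neg hv
      linarith [this.2]
    rw [sign_neg this, sign_neg hv]
  · exfalso; rw [hv, abs_zero] at h; exact absurd h (abs_nonneg _).not_gt
  · have : 0 < u := by
      have := abs_lt.1 h
      have h2 : |v| = v := abs_of_pos hv
      linarith [this.1]
    rw [sign_pos this, sign_pos hv]

lemma mul_neg_of_signs {u v : ℝ} (h : SignType.sign u ≠ SignType.sign v) (hu : u ≠ 0)
    (hv : v ≠ 0) : u * v < 0 := by
  rcases hu.lt_or_gt with h1 | h1 <;> rcases hv.lt_or_gt with h2 | h2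
  · exact absurd (by rw [sign_neg h1, sign_neg h2]) h
  · exact mul_neg_of_neg_of_pos h1 h2
  · exact mul_neg_of_pos_of_neg h1 h2
  · exact absurd (by rw [sign_pos h1, sign_pos h2]) h

lemma not_mul_neg_of_sign_eq {u v : ℝ} (h : SignType.sign u = SignType.sign v) :
    ¬ u * v < 0 := by
  rcases lt_trichotomy u 0 with h1 | h1 | h1
  · rw [sign_neg h1] at h
    have hv : v < 0 := by
      rcases lt_trichotomy v 0 with h2 | h2 | h2
      · exact h2
      · simp [h2] at h
      · rw [sign_pos h2] at h; exact absurd h (by decide)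
    exact not_lt.2 (mul_pos_of_neg_of_neg h1 hv).le
  · simp [h1]
  · rw [sign_pos h1] at h
    have hv : 0 < v := by
      rcases lt_trichotomy v 0 with h2 | h2 | h2
      · rw [sign_neg h2] at h; exact absurd h (by decide)
      · simp [h2] at h
      · exact h2
    exact not_lt.2 (mul_pos h1 hv).le

lemma ne_sign_of_ne {s t : SignType} (hs : s ≠ 0) (ht : t ≠ 0) (h : s ≠ t) : s * t = -1 := by
  cases s <;> cases t <;> simp_all

-- linear algebra of val
lemma val_lineMap (i : ι) (y x : EuclideanSpace ℝ (Fin n)) (t : ℝ) :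
    A.val i (y + t • (x - y)) = (1 - t) * A.val i y + t * A.val i x := by
  simp only [val, inner_add_right, inner_smul_right, inner_sub_right]
  ring

lemma val_lip (i : ι) (x' x : EuclideanSpace ℝ (Fin n)) :
    |A.val i x' - A.val i x| ≤ ‖A.a i‖ * dist x' x := by
  have : A.val i x' - A.val i x = (inner ℝ (A.a i) (x' - x) : ℝ) := by
    simp only [val, inner_sub_right]; ring
  rw [this, dist_eq_norm]
  exact abs_real_inner_le_norm _ _

lemma val_continuous (i : ι) : Continuous (A.val i) := by
  unfold val
  exact (continuous_const.inner continuous_id).sub continuous_const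

lemma big_val {i : ι} {y : EuclideanSpace ℝ (Fin n)} {ε : ℝ} (hε : 0 < ε)
    (h : ∀ y' ∈ ball y ε, A.val i y' ≠ 0) : ε * ‖A.a i‖ ≤ |A.val i y| := by
  by_contra hlt
  push_neg at hlt
  have ha : (0:ℝ) < ‖A.a i‖ := norm_pos_iff.2 (A.ha i)
  set c : ℝ := A.val i y / (‖A.a i‖ ^ 2) with hc
  have hself : (inner ℝ (A.a i) (A.a i) : ℝ) = ‖A.a i‖ ^ 2 := real_inner_self_eq_norm_sq _
  have hy' : A.val i (y - c • A.a i) = 0 := by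
    simp only [val, inner_sub_right, inner_smul_right, hself, hc]
    field_simp
    ring
  have hdist : dist (y - c • A.a i) y < ε := by
    rw [dist_eq_norm]
    have : y - c • A.a i - y = -(c • A.a i) := by abel
    rw [this, norm_neg, norm_smul, Real.norm_eq_abs, hc, abs_div]
    rw [abs_of_pos (by positivity : (0:ℝ) < ‖A.a i‖ ^ 2)]
    rw [div_mul_eq_mul_div, div_lt_iff₀ (by positivity)]
    calc |A.val i y| * ‖A.a i‖ < (ε * ‖A.a i‖) * ‖A.a i‖ := by
          exact mul_lt_mul_of_pos_right hlt ha
      _ = ε * ‖A.a i‖ ^ 2 := by ring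
  exact h _ (mem_ball.2 hdist) hy'

lemma locFin' (x : EuclideanSpace ℝ (Fin n)) : ∃ ε > 0,
    {i : ι | ∃ y ∈ Metric.ball x ε, A.val i y = 0}.Finite := by
  obtain ⟨ε, hε, hfin⟩ := A.locFin x
  refine ⟨ε, hε, ?_⟩
  convert hfin using 2
  ext i
  simp [val, sub_eq_zero]


-- finite min helper
lemma exists_pos_le_of_finite {ι' : Type*} {S : Set ι'} (hS : S.Finite) (r : ι' → ℝ)
    (c : ℝ) (hc : 0 < c) (hr : ∀ i ∈ S, 0 < r i) :
    ∃ t > 0, t ≤ c ∧ ∀ i ∈ S, t ≤ r i := by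
  revert hr
  refine Set.Finite.induction_on (motive := fun S _ =>
    (∀ i ∈ S, 0 < r i) → ∃ t > 0, t ≤ c ∧ ∀ i ∈ S, t ≤ r i) S hS ?_ ?_
  · exact fun _ => ⟨c, hc, le_refl c, fun i hi => absurd hi (Set.notMem_empty i)⟩
  · intro a s _ _ ih hr
    obtain ⟨t, ht, htc, hts⟩ := ih (fun i hi => hr i (Set.mem_insert_of_mem a hi))
    refine ⟨min t (r a), lt_min ht (hr a (Set.mem_insert a s)), (min_le_left _ _).trans htc, ?_⟩
    rintro i (rfl | hi)
    · exact min_le_right _ _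
    · exact (min_le_left _ _).trans (hts i hi)

open Classical in
/-- The key ray lemma. -/
lemma ray (y x : EuclideanSpace ℝ (Fin n)) : ∃ t₀ > 0, ∀ t : ℝ, 0 < t → t < t₀ →
    ∀ i, SignType.sign (A.val i (y + t • (x - y))) =
      if A.val i y = 0 then SignType.sign (A.val i x) else SignType.sign (A.val i y) := by
  obtain ⟨ε, hε, hfin⟩ := A.locFin' y
  set S := {i : ι | ∃ y' ∈ Metric.ball y ε, A.val i y' = 0} with hs
  set r : ι → ℝ := fun i => if A.val i y = 0 then 1 else
    |A.val i y| / (|A.val i x - A.val i y| + 1) with hrdef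
  have hrpos : ∀ i ∈ S, 0 < r i := by
    intro i _
    simp only [hrdef]
    split
    · norm_num
    · next h => positivity
  obtain ⟨t₀, ht₀, ht₀c, ht₀S⟩ :=
    exists_pos_le_of_finite hfin r (ε / (‖x - y‖ + 1)) (by positivity) hrpos
  refine ⟨t₀, ht₀, fun t ht htlt i => ?_⟩
  have hval : A.val i (y + t • (x - y)) = (1 - t) * A.val i y + t * A.val i x :=
    A.val_lineMap i y x t
  by_cases hy0 : A.val i y = 0
  · rw [if_pos hy0]
    rw [hval, hy0]
    rw [show (1 - t) * 0 + t * A.val i x = t * A.val i x by ring]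
    rw [sign_mul, sign_pos ht, one_mul]
  · rw [if_neg hy0]
    apply sign_eq_of_abs_lt
    have hdiff : A.val i (y + t • (x - y)) - A.val i y = t * (A.val i x - A.val i y) := by
      rw [hval]; ring
    rw [hdiff, abs_mul, abs_of_pos ht]
    by_cases hiS : i ∈ S
    · have hti : t < r i := lt_of_lt_of_le htlt (ht₀S i hiS)
      rw [hrdef] at hti
      simp only [if_neg hy0] at hti
      calc t * |A.val i x - A.val i y| ≤ t * (|A.val i x - A.val i y| + 1) := by nlinarith
        _ < |A.val i y| := by
            rw [lt_div_iff₀ (by positivity)] at hti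
            linarith
    · have hball : ∀ y' ∈ ball y ε, A.val i y' ≠ 0 := by
        intro y' hy' h0
        exact hiS ⟨y', hy', h0⟩
      have hbig : ε * ‖A.a i‖ ≤ |A.val i y| := A.big_val hε hball
      have ha : (0:ℝ) < ‖A.a i‖ := norm_pos_iff.2 (A.ha i)
      have hip : |A.val i x - A.val i y| ≤ ‖A.a i‖ * ‖x - y‖ := by
        have := A.val_lip i x y
        rwa [dist_eq_norm] at this
      have htn : t * ‖x - y‖ < ε := by
        have : t < ε / (‖x - y‖ + 1) := lt_of_lt_of_le htlt ht₀c
        rw [lt_div_iff₀ (by positivity)] at this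
        nlinarith [norm_nonneg (x - y)]
      calc t * |A.val i x - A.val i y| ≤ t * (‖A.a i‖ * ‖x - y‖) := by nlinarith
        _ = ‖A.a i‖ * (t * ‖x - y‖) := by ring
        _ < ‖A.a i‖ * ε := by exact mul_lt_mul_of_pos_left htn ha
        _ ≤ |A.val i y| := by rw [mul_comm]; exact hbig

lemma isOpen_openCell {σ : ι → SignType} (hσ : ∀ i, σ i ≠ 0) : IsOpen (A.openCell σ) := by
  rw [Metric.isOpen_iff]
  intro y hy
  obtain ⟨ε, hε, hfin⟩ := A.locFin' y
  set r : ι → ℝ := fun i => |A.val i y| / (‖A.a i‖ + 1) with hrdef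
  have hy0 : ∀ i, A.val i y ≠ 0 := by
    intro i h0
    exact hσ i (by rw [← hy i, h0, sign_zero])
  have hrpos : ∀ i ∈ {i : ι | ∃ y' ∈ Metric.ball y ε, A.val i y' = 0}, 0 < r i := by
    intro i _
    have := hy0 i
    simp only [hrdef]
    positivity
  obtain ⟨ρ, hρ, hρε, hρS⟩ := exists_pos_le_of_finite hfin r ε hε hrpos
  refine ⟨ρ, hρ, fun y' hy' => ?_⟩
  intro i
  rw [← hy i]
  apply sign_eq_of_abs_lt
  have hlip : |A.val i y' - A.val i y| ≤ ‖A.a i‖ * dist y' y := A.val_lip i y' y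
  have ha : (0:ℝ) < ‖A.a i‖ := norm_pos_iff.2 (A.ha i)
  have hd : dist y' y < ρ := mem_ball.1 hy'
  by_cases hiS : i ∈ {i : ι | ∃ y' ∈ Metric.ball y ε, A.val i y' = 0}
  · have : ρ ≤ r i := hρS i hiS
    rw [hrdef] at this
    calc |A.val i y' - A.val i y| ≤ ‖A.a i‖ * dist y' y := hlip
      _ < ‖A.a i‖ * (|A.val i y| / (‖A.a i‖ + 1)) := by
          apply mul_lt_mul_of_pos_left (lt_of_lt_of_le hd this) ha
      _ < |A.val i y| := by
          rw [mul_div_assoc']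
          rw [div_lt_iff₀ (by positivity)]
          have := abs_pos.2 (hy0 i)
          nlinarith
  · have hball : ∀ z ∈ ball y ε, A.val i z ≠ 0 := fun z hz h0 => hiS ⟨z, hz, h0⟩
    have hbig : ε * ‖A.a i‖ ≤ |A.val i y| := A.big_val hε hball
    calc |A.val i y' - A.val i y| ≤ ‖A.a i‖ * dist y' y := hlip
      _ < ‖A.a i‖ * ε := mul_lt_mul_of_pos_left (lt_of_lt_of_le hd hρε) ha
      _ ≤ |A.val i y| := by rw [mul_comm]; exact hbig

lemma mem_openCell_self (y : EuclideanSpace ℝ (Fin n)) : y ∈ A.openCell (A.signAt y) :=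
  fun _ => rfl

lemma sign_mem_closure {σ : ι → SignType} {x' : EuclideanSpace ℝ (Fin n)}
    (h : x' ∈ closure (A.openCell σ)) (i : ι) :
    SignType.sign (A.val i x') = 0 ∨ SignType.sign (A.val i x') = σ i := by
  cases hσ : σ i with
  | zero =>
    left
    have hsub : A.openCell σ ⊆ {z | A.val i z = 0} := by
      intro z hz
      have := hz i
      rw [hσ] at this
      exact sign_eq_zero_iff.1 this
    have hcl : IsClosed {z : EuclideanSpace ℝ (Fin n) | A.val i z = 0} :=
      isClosed_eq (A.val_continuous i) continuous_const
    have := closure_minimal hsub hcl h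
    rw [this, sign_zero]
  | pos =>
    have hsub : A.openCell σ ⊆ {z | 0 ≤ A.val i z} := by
      intro z hz
      have := hz i
      rw [hσ, SignType.pos_eq_one] at this
      exact le_of_lt (sign_eq_one_iff.1 this)
    have hcl : IsClosed {z : EuclideanSpace ℝ (Fin n) | 0 ≤ A.val i z} :=
      isClosed_le continuous_const (A.val_continuous i)
    have h0 : 0 ≤ A.val i x' := closure_minimal hsub hcl h
    rcases h0.eq_or_lt with h1 | h1
    · left; rw [← h1, sign_zero]
    · right; rw [SignType.pos_eq_one]; exact sign_pos h1
  | neg =>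
    have hsub : A.openCell σ ⊆ {z | A.val i z ≤ 0} := by
      intro z hz
      have := hz i
      rw [hσ, SignType.neg_eq_neg_one] at this
      exact le_of_lt (sign_eq_neg_one_iff.1 this)
    have hcl : IsClosed {z : EuclideanSpace ℝ (Fin n) | A.val i z ≤ 0} :=
      isClosed_le (A.val_continuous i) continuous_const
    have h0 : A.val i x' ≤ 0 := closure_minimal hsub hcl h
    rcases h0.lt_or_eq with h1 | h1
    · right; rw [SignType.neg_eq_neg_one]; exact sign_neg h1
    · left; rw [h1, sign_zero]



-- interior sign lemma
lemma sign_interior {σ : ι → SignType} {x' : EuclideanSpace ℝ (Fin n)}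
    (h : x' ∈ interior (closure (A.openCell σ))) (i : ι) (hi : σ i ≠ 0) :
    SignType.sign (A.val i x') = σ i := by
  rcases A.sign_mem_closure (interior_subset h) i with h0 | h0
  · exfalso
    obtain ⟨ρ, hρ, hball⟩ := Metric.isOpen_iff.1 isOpen_interior x' h
    have hv0 : A.val i x' = 0 := sign_eq_zero_iff.1 h0
    have ha : (0:ℝ) < ‖A.a i‖ := norm_pos_iff.2 (A.ha i)
    set t : ℝ := ρ / (2 * (‖A.a i‖ + 1)) with htdef
    have ht : 0 < t := by positivity
    have hmem : ∀ s : ℝ, |s| = t → x' + s • A.a i ∈ closure (A.openCell σ) := by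
      intro s hs
      apply interior_subset
      apply hball
      rw [mem_ball, dist_eq_norm]
      have : x' + s • A.a i - x' = s • A.a i := by abel
      rw [this, norm_smul, Real.norm_eq_abs, hs, htdef]
      rw [div_mul_eq_mul_div, div_lt_iff₀ (by positivity)]
      nlinarith
    have hval : ∀ s : ℝ, A.val i (x' + s • A.a i) = s * ‖A.a i‖ ^ 2 := by
      intro s
      simp only [val, inner_add_right, inner_smul_right, real_inner_self_eq_norm_sq]
      simp only [val] at hv0
      linarith
    have hpos := A.sign_mem_closure (hmem t (abs_of_pos ht)) i
    have hneg := A.sign_mem_closure (hmem (-t) (by rw [abs_neg, abs_of_pos ht])) i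
    rw [hval t] at hpos
    rw [hval (-t)] at hneg
    have h1 : SignType.sign (t * ‖A.a i‖ ^ 2) = 1 := sign_pos (by positivity)
    have h2 : SignType.sign (-t * ‖A.a i‖ ^ 2) = -1 := sign_neg (by nlinarith [mul_pos ht (pow_pos ha 2)])
    rw [h1] at hpos
    rw [h2] at hneg
    rcases hpos with h3 | h3
    · exact absurd h3.symm (by decide)
    · rcases hneg with h4 | h4
      · exact absurd h4.symm (by decide)
      · rw [← h3] at h4; exact absurd h4 (by decide)
  · exact h0

lemma openCell_subset_interior {x : EuclideanSpace ℝ (Fin n)} (hx : ∀ i, A.val i x ≠ 0) :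
    A.openCell (A.signAt x) ⊆ interior (closure (A.openCell (A.signAt x))) :=
  interior_maximal subset_closure
    (A.isOpen_openCell (fun i => by simp only [signAt, ne_eq, sign_eq_zero_iff]; exact hx i))

lemma mem_sep {x y : EuclideanSpace ℝ (Fin n)} {i : ι} (hx : ∀ j, A.val j x ≠ 0)
    (hy : ∀ j, A.val j y ≠ 0) (hne : A.signAt x i ≠ A.signAt y i) :
    i ∈ A.sep (closure (A.openCell (A.signAt x))) (closure (A.openCell (A.signAt y))) := by
  intro p hp q hq
  have hsx : A.signAt x i ≠ 0 := by simp only [signAt, ne_eq, sign_eq_zero_iff]; exact hx i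
  have hsy : A.signAt y i ≠ 0 := by simp only [signAt, ne_eq, sign_eq_zero_iff]; exact hy i
  have h1 : SignType.sign (A.val i p) = A.signAt x i := A.sign_interior hp i hsx
  have h2 : SignType.sign (A.val i q) = A.signAt y i := A.sign_interior hq i hsy
  apply mul_neg_of_signs
  · rw [h1, h2]; exact hne
  · intro h0; rw [h0, sign_zero] at h1; exact hsx h1.symm
  · intro h0; rw [h0, sign_zero] at h2; exact hsy h2.symm

lemma not_mem_sep {x y : EuclideanSpace ℝ (Fin n)} {i : ι} (hx : ∀ j, A.val j x ≠ 0)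
    (hy : ∀ j, A.val j y ≠ 0) (heq : A.signAt x i = A.signAt y i) :
    i ∉ A.sep (closure (A.openCell (A.signAt x))) (closure (A.openCell (A.signAt y))) := by
  intro hsep
  have hxm := A.openCell_subset_interior hx (A.mem_openCell_self x)
  have hym := A.openCell_subset_interior hy (A.mem_openCell_self y)
  exact not_mul_neg_of_sign_eq heq (hsep x hxm y hym)

lemma supp_face (y : EuclideanSpace ℝ (Fin n)) (i : ι) :
    i ∈ A.supp (closure (A.openCell (A.signAt y))) ↔ A.val i y = 0 := by
  constructor
  · intro h
    exact h (subset_closure (A.mem_openCell_self y))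
  · intro h0
    have hsub : A.openCell (A.signAt y) ⊆ A.hyperplane i := by
      intro z hz
      have := hz i
      simp only [signAt, h0, sign_zero] at this
      exact sign_eq_zero_iff.1 this
    exact closure_minimal hsub (isClosed_eq (A.val_continuous i) continuous_const)



open Classical in
lemma approx (y x : EuclideanSpace ℝ (Fin n)) {ε : ℝ} (hε : 0 < ε) :
    ∃ z : EuclideanSpace ℝ (Fin n), dist y z < ε ∧
      ∀ i, A.signAt z i = if A.val i y = 0 then A.signAt x i else A.signAt y i := by
  obtain ⟨t₀, ht₀, hray⟩ := A.ray y x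
  set t : ℝ := min t₀ (ε / (‖x - y‖ + 1)) / 2 with htdef
  have htpos : 0 < t := by
    apply div_pos (lt_min ht₀ (by positivity)) (by norm_num)
  have htlt : t < t₀ := by
    calc t < min t₀ (ε / (‖x - y‖ + 1)) := by
          rw [htdef]
          exact half_lt_self (lt_min ht₀ (by positivity))
      _ ≤ t₀ := min_le_left _ _
  refine ⟨y + t • (x - y), ?_, fun i => hray t htpos htlt i⟩
  rw [dist_eq_norm]
  have : y - (y + t • (x - y)) = -(t • (x - y)) := by abel
  rw [this, norm_neg, norm_smul, Real.norm_eq_abs, abs_of_pos htpos]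
  have h1 : t < ε / (‖x - y‖ + 1) := by
    calc t < min t₀ (ε / (‖x - y‖ + 1)) := by
          rw [htdef]
          exact half_lt_self (lt_min ht₀ (by positivity))
      _ ≤ _ := min_le_right _ _
  have h2 : t * (‖x - y‖ + 1) < ε := by
    rw [lt_div_iff₀ (by positivity)] at h1
    linarith
  nlinarith [norm_nonneg (x - y)]

open Classical in
lemma exists_CF {x : EuclideanSpace ℝ (Fin n)} (y : EuclideanSpace ℝ (Fin n))
    (hx : ∀ i, A.val i x ≠ 0) :
    ∃ z : EuclideanSpace ℝ (Fin n), (∀ i, A.val i z ≠ 0) ∧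
      (∀ i, A.signAt z i = if A.val i y = 0 then A.signAt x i else A.signAt y i) ∧
      A.IsCF (closure (A.openCell (A.signAt x))) (closure (A.openCell (A.signAt y)))
        (closure (A.openCell (A.signAt z))) := by
  obtain ⟨z, _, hzsign⟩ := A.approx y x one_pos
  have hz : ∀ i, A.val i z ≠ 0 := by
    intro i h0
    have := hzsign i
    simp only [signAt, h0, sign_zero] at this
    by_cases hy0 : A.val i y = 0
    · rw [if_pos hy0] at this
      exact hx i (sign_eq_zero_iff.1 this.symm)
    · rw [if_neg hy0] at this
      exact hy0 (sign_eq_zero_iff.1 this.symm)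
  refine ⟨z, hz, hzsign, ⟨z, hz, rfl⟩, ?_, ?_⟩
  · -- closure(openCell (signAt y)) ⊆ closure(openCell (signAt z))
    apply closure_minimal _ isClosed_closure
    intro y' hy'
    rw [Metric.mem_closure_iff]
    intro ε hε
    obtain ⟨z', hz'd, hz'sign⟩ := A.approx y' x hε
    refine ⟨z', ?_, hz'd⟩
    intro i
    show A.signAt z' i = A.signAt z i
    rw [hz'sign i, hzsign i]
    have hyy' : SignType.sign (A.val i y') = A.signAt y i := hy' i
    by_cases hy0 : A.val i y = 0
    · have : A.val i y' = 0 := by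
        apply sign_eq_zero_iff.1
        rw [hyy']
        simp [signAt, hy0]
      rw [if_pos this, if_pos hy0]
    · have : A.val i y' ≠ 0 := by
        intro h0
        apply hy0
        apply sign_eq_zero_iff.1
        show A.signAt y i = 0
        rw [← hyy', h0, sign_zero]
      rw [if_neg this, if_neg hy0]
      exact hyy'
  · rw [Set.eq_empty_iff_forall_notMem]
    rintro i ⟨hsep, hsupp⟩
    have hy0 : A.val i y = 0 := (A.supp_face y i).1 hsupp
    have heq : A.signAt x i = A.signAt z i := by
      rw [hzsign i, if_pos hy0]
    exact A.not_mem_sep hx hz heq hsep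

open Classical in
lemma CF_unique {x y : EuclideanSpace ℝ (Fin n)} (hx : ∀ i, A.val i x ≠ 0)
    {z : EuclideanSpace ℝ (Fin n)} (hz : ∀ i, A.val i z ≠ 0)
    (hD : A.IsCF (closure (A.openCell (A.signAt x))) (closure (A.openCell (A.signAt y)))
      (closure (A.openCell (A.signAt z)))) :
    ∀ i, A.signAt z i = if A.val i y = 0 then A.signAt x i else A.signAt y i := by
  obtain ⟨_, hFD, hsep⟩ := hD
  intro i
  by_cases hy0 : A.val i y = 0
  · rw [if_pos hy0]
    by_contra hne
    have : i ∈ A.sep (closure (A.openCell (A.signAt x))) (closure (A.openCell (A.signAt z))) :=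
      A.mem_sep hx hz (fun h => hne h.symm)
    have hmem : i ∈ A.sep (closure (A.openCell (A.signAt x))) (closure (A.openCell (A.signAt z)))
        ∩ A.supp (closure (A.openCell (A.signAt y))) := ⟨this, (A.supp_face y i).2 hy0⟩
    rw [hsep] at hmem
    exact hmem
  · rw [if_neg hy0]
    have hyD : y ∈ closure (A.openCell (A.signAt z)) :=
      hFD (subset_closure (A.mem_openCell_self y))
    rcases A.sign_mem_closure hyD i with h0 | h0
    · exact absurd (sign_eq_zero_iff.1 h0) hy0
    · exact h0.symm

lemma mem_span_of_flat {y z : EuclideanSpace ℝ (Fin n)} {s : Set (EuclideanSpace ℝ (Fin n))}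
    (h : A.openCell (A.signAt y) ⊆ (affineSpan ℝ s : Set (EuclideanSpace ℝ (Fin n))))
    (hz : ∀ i, A.val i y = 0 → A.val i z = 0) :
    z ∈ (affineSpan ℝ s : Set (EuclideanSpace ℝ (Fin n))) := by
  obtain ⟨t₀, ht₀, hray⟩ := A.ray y z
  set t : ℝ := t₀ / 2 with htdef
  have htpos : 0 < t := by positivity
  have htlt : t < t₀ := half_lt_self ht₀
  set w : EuclideanSpace ℝ (Fin n) := y + t • (z - y) with hwdef
  have hw : w ∈ A.openCell (A.signAt y) := by
    intro i
    rw [hwdef]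
    rw [hray t htpos htlt i]
    by_cases hy0 : A.val i y = 0
    · rw [if_pos hy0]
      rw [hz i hy0]
      simp [signAt, hy0]
    · rw [if_neg hy0]
      rfl
  have hzeq : z = (t⁻¹ : ℝ) • (w -ᵥ y) +ᵥ y := by
    rw [vsub_eq_sub, hwdef]
    have h1 : y + t • (z - y) - y = t • (z - y) := by abel
    rw [h1, smul_smul, inv_mul_cancel₀ (ne_of_gt htpos), one_smul]
    simp [vadd_eq_add]
  rw [hzeq]
  exact AffineSubspace.smul_vsub_vadd_mem _ (t⁻¹ : ℝ) (h hw)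
    (h (A.mem_openCell_self y)) (h (A.mem_openCell_self y))


lemma cell_ext {c d : A.Cell} (h1 : c.C = d.C) (h2 : c.F = d.F) : c = d := by
  cases c; cases d; cases h1; cases h2; rfl


end Arrangement

/-- For a valid order and a chamber `C`, the subposet `N(C)` of the Salvetti poset is
isomorphic to the face poset of the arrangement restricted to `X_C` (whose faces are the
faces of `A` contained in `X_C`), via `⟨D,F⟩ ↦ F`. -/
theorem stmt17 {n : ℕ} {ι : Type} (A : Arrangement n ι)
    (lt : Set (EuclideanSpace ℝ (Fin n)) → Set (EuclideanSpace ℝ (Fin n)) → Prop)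
    (hvalid : A.IsValidOrder lt)
    (C F_C : Set (EuclideanSpace ℝ (Fin n)))
    (hC : A.IsChamber C) (hFC : A.IsFaceOf F_C C)
    (hJ : A.J lt C =
      {X | A.IsFlat X ∧ X ⊆ (affineSpan ℝ F_C : Set (EuclideanSpace ℝ (Fin n)))}) :
    ∃ f : {c : A.Cell // A.inN lt C c} →
        {F : Set (EuclideanSpace ℝ (Fin n)) //
          A.IsFace F ∧ F ⊆ (affineSpan ℝ F_C : Set (EuclideanSpace ℝ (Fin n)))},
      Function.Bijective f ∧
      (∀ c, (f c : Set (EuclideanSpace ℝ (Fin n))) = (c : A.Cell).F) ∧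
      (∀ c c' : {c : A.Cell // A.inN lt C c}, A.cellLE c.val c'.val ↔
        (f c' : Set (EuclideanSpace ℝ (Fin n))) ⊆
          (f c : Set (EuclideanSpace ℝ (Fin n)))) := by
  classical
  obtain ⟨xC, hxC, hCeq⟩ := hC
  have key : ∀ c : A.Cell, A.inN lt C c →
      (c.F ⊆ (affineSpan ℝ F_C : Set (EuclideanSpace ℝ (Fin n)))) := by
    intro c hc
    obtain ⟨hS, hmin⟩ := hc
    obtain ⟨y, hFeq⟩ := c.isFace
    obtain ⟨zD, hzD, hDeq⟩ := c.isChamber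
    set X : Set (EuclideanSpace ℝ (Fin n)) := ⋂ i ∈ {i | A.val i y = 0}, A.hyperplane i
      with hXdef
    have hyX : y ∈ X := by
      simp only [hXdef, Set.mem_iInter]
      intro i hi
      exact hi
    have hXJ : X ∈ A.J lt C := by
      refine ⟨⟨⟨y, hyX⟩, {i | A.val i y = 0}, rfl⟩, ?_⟩
      intro C' hC' hlt
      have hnot := hmin C' hC' hlt
      obtain ⟨zC', hzC', hC'eq⟩ := hC'
      have hne : A.sep C' c.C ∩ A.supp c.F ≠ ∅ := by
        intro hempty
        exact hnot ⟨c.isChamber, c.faceLe, hempty⟩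
      obtain ⟨i, hisep, hisupp⟩ := Set.nonempty_iff_ne_empty.2 hne
      have hisupp2 := hisupp
      rw [hFeq] at hisupp2
      have hy0 : A.val i y = 0 := (A.supp_face y i).1 hisupp2
      refine ⟨i, ?_, ?_⟩
      · exact Set.biInter_subset_of_mem hy0
      · rw [hCeq, hC'eq]
        apply A.mem_sep hxC hzC'
        have h1 : A.signAt xC i = A.signAt zD i := by
          by_contra hne2
          have hmem : i ∈ A.sep C c.C := by
            rw [hCeq, hDeq]; exact A.mem_sep hxC hzD hne2
          have hm := Set.mem_inter hmem hisupp
          rw [hS.2.2] at hm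
          exact hm
        have h2 : A.signAt zC' i ≠ A.signAt zD i := by
          intro heq
          have hmem : i ∉ A.sep C' c.C := by
            rw [hC'eq, hDeq]; exact A.not_mem_sep hzC' hzD heq
          exact hmem hisep
        intro heq
        exact h2 (heq.symm.trans h1)
    rw [hJ] at hXJ
    have hFX : c.F ⊆ X := by
      rw [hFeq]
      apply closure_minimal _ (isClosed_biInter
        (fun i _ => isClosed_eq (A.val_continuous i) continuous_const))
      intro w hw
      simp only [Set.mem_iInter]
      intro i hi
      have hi' : A.val i y = 0 := hi
      have hwi : SignType.sign (A.val i w) = SignType.sign (A.val i y) := hw i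
      rw [hi', sign_zero] at hwi
      exact sign_eq_zero_iff.1 hwi
    exact hFX.trans hXJ.2
  refine ⟨fun c => ⟨c.val.F, c.val.isFace, key c.val c.prop⟩, ⟨?_, ?_⟩, fun c => rfl, ?_⟩
  · -- injective
    intro c c' hfeq
    have hFF0 : c.val.F = c'.val.F := congrArg Subtype.val hfeq
    apply Subtype.ext
    obtain ⟨cv, hcv⟩ := c
    obtain ⟨cv', hcv'⟩ := c'
    have hFF : cv.F = cv'.F := hFF0
    show cv = cv'
    obtain ⟨y, hFeq⟩ := cv.isFace
    obtain ⟨zD, hzD, hDeq⟩ := cv.isChamber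
    obtain ⟨zD', hzD', hD'eq⟩ := cv'.isChamber
    have h1 : A.IsCF (closure (A.openCell (A.signAt xC))) (closure (A.openCell (A.signAt y)))
        (closure (A.openCell (A.signAt zD))) := by
      have hh : A.IsCF C cv.F cv.C := hcv.1
      rw [hCeq, hFeq, hDeq] at hh
      exact hh
    have h2 : A.IsCF (closure (A.openCell (A.signAt xC))) (closure (A.openCell (A.signAt y)))
        (closure (A.openCell (A.signAt zD'))) := by
      have hh : A.IsCF C cv'.F cv'.C := hcv'.1
      rw [hCeq, ← hFF, hFeq, hD'eq] at hh
      exact hh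
    have e1 := A.CF_unique hxC hzD h1
    have e2 := A.CF_unique hxC hzD' h2
    have hsg : A.signAt zD = A.signAt zD' := funext fun i => (e1 i).trans (e2 i).symm
    have hCC : cv.C = cv'.C := by rw [hDeq, hD'eq, hsg]
    exact A.cell_ext hCC hFF
  · -- surjective
    rintro ⟨F, hF, hFspan⟩
    obtain ⟨y, hFeq⟩ := hF
    obtain ⟨z, hz, hzsign, hCF⟩ := A.exists_CF y hxC
    have hCF' : A.IsCF C F (closure (A.openCell (A.signAt z))) := by
      rw [hCeq, hFeq]; exact hCF
    have hocs : A.openCell (A.signAt y) ⊆ (affineSpan ℝ F_C : Set (EuclideanSpace ℝ (Fin n))) := by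
      intro w hw
      apply hFspan
      rw [hFeq]
      exact subset_closure hw
    have hinN : A.inN lt C (⟨closure (A.openCell (A.signAt z)), F, ⟨z, hz, rfl⟩,
        ⟨y, hFeq⟩, hCF'.2.1⟩ : A.Cell) := by
      refine ⟨hCF', ?_⟩
      intro C' hC' hlt hinS'
      obtain ⟨zC', hzC', hC'eq⟩ := hC'
      set X : Set (EuclideanSpace ℝ (Fin n)) := ⋂ i ∈ {i | A.val i y = 0}, A.hyperplane i
        with hXdef
      have hyX : y ∈ X := by
        simp only [hXdef, Set.mem_iInter]
        intro i hi
        exact hi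
      have hXspan : X ⊆ (affineSpan ℝ F_C : Set (EuclideanSpace ℝ (Fin n))) := by
        intro z' hz'
        apply A.mem_span_of_flat hocs
        intro i hi
        simp only [hXdef, Set.mem_iInter] at hz'
        exact hz' i hi
      have hXJ : X ∈ A.J lt C := by
        rw [hJ]
        exact ⟨⟨⟨y, hyX⟩, {i | A.val i y = 0}, rfl⟩, hXspan⟩
      obtain ⟨i, hiX, hisep⟩ := hXJ.2 C' ⟨zC', hzC', hC'eq⟩ hlt
      have hy0 : A.val i y = 0 := hiX hyX
      have hne : A.signAt xC i ≠ A.signAt zC' i := by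
        intro heq
        rw [hCeq, hC'eq] at hisep
        exact A.not_mem_sep hxC hzC' heq hisep
      have hzi : A.signAt z i = A.signAt xC i := by
        rw [hzsign i, if_pos hy0]
      have hmem : i ∈ A.sep C' (closure (A.openCell (A.signAt z))) := by
        rw [hC'eq]
        apply A.mem_sep hzC' hz
        intro heq
        exact hne (hzi.symm.trans heq.symm)
      have hm := Set.mem_inter hmem ((A.supp_face y i).2 hy0)
      rw [← hFeq] at hm
      rw [hinS'.2.2] at hm
      exact hm
    exact ⟨⟨_, hinN⟩, Subtype.ext rfl⟩
  · -- order
    intro c c'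
    constructor
    · intro h
      exact h.1
    · intro h
      have hss : c'.val.F ⊆ c.val.F := h
      obtain ⟨cv, hcv⟩ := c
      obtain ⟨cv', hcv'⟩ := c'
      show A.cellLE cv cv'
      refine ⟨hss, cv.isChamber, cv.faceLe, ?_⟩
      rw [Set.eq_empty_iff_forall_notMem]
      rintro i ⟨hisep, hisupp⟩
      have hisupp' : i ∈ A.supp cv'.F := fun w hw => hisupp (hss hw)
      obtain ⟨zD, hzD, hDeq⟩ := cv.isChamber
      obtain ⟨zD', hzD', hD'eq⟩ := cv'.isChamber
      have h1 : A.signAt xC i = A.signAt zD i := by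
        by_contra hne
        have hmem : i ∈ A.sep C cv.C := by
          rw [hCeq, hDeq]; exact A.mem_sep hxC hzD hne
        have hm := Set.mem_inter hmem hisupp
        rw [hcv.1.2.2] at hm
        exact hm
      have h2 : A.signAt xC i = A.signAt zD' i := by
        by_contra hne
        have hmem : i ∈ A.sep C cv'.C := by
          rw [hCeq, hD'eq]; exact A.mem_sep hxC hzD' hne
        have hm := Set.mem_inter hmem hisupp'
        rw [hcv'.1.2.2] at hm
        exact hm
      have hnot : i ∉ A.sep cv'.C cv.C := by
        rw [hD'eq, hDeq]
        exact A.not_mem_sep hzD' hzD (h2.symm.trans h1)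
      exact hnot hisep
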